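/- Let k ≥ 0 be a real number, let A > 0, and let w : ℝ → ℝ be twice continuously differentiable on [0, A]. Suppose w(0) ≥ 0, w′(0) ≥ 0, and w″(t) > k·w(t) for every t ∈ [0, A]. Then w(t) > 0 for every t ∈ (0, A]. -/

import Mathlib

open Set

/-- ODE comparison: if `w` is `C²` on `[0,A]` with `w(0) ≥ 0`, `w′(0) ≥ 0` and
`w″(t) > k·w(t)` on `[0,A]` (for `k ≥ 0`), then `w > 0` on `(0,A]`. -/
theorem stmt_14 (k A : ℝ) (hk : 0 ≤ k) (hA : 0 < A) (w : ℝ → ℝ)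
    (hw : ContDiffOn ℝ 2 w (Icc 0 A))
    (hw0 : 0 ≤ w 0)
    (hw0' : 0 ≤ derivWithin w (Icc 0 A) 0)
    (hw'' : ∀ t ∈ Icc 0 A,
      k * w t < derivWithin (derivWithin w (Icc 0 A)) (Icc 0 A) t) :
    ∀ t ∈ Ioc 0 A, 0 < w t := by
  set I := Icc (0:ℝ) A with hI
  have hud : UniqueDiffOn ℝ I := uniqueDiffOn_Icc hA
  set w1 := derivWithin w I with hw1def
  set w2 := derivWithin w1 I with hw2def
  have hw1 : ContDiffOn ℝ 1 w1 I := hw.derivWithin hud (by norm_num)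
  have hcw : ContinuousOn w I := hw.continuousOn
  have hcw1 : ContinuousOn w1 I := hw1.continuousOn
  have hcw2 : ContinuousOn w2 I := (ContDiffOn.derivWithin (m := 0) hw1 hud (by norm_num)).continuousOn
  -- deriv equals derivWithin at interior points
  have hderiv : ∀ u ∈ Ioo (0:ℝ) A, deriv w u = w1 u := fun u hu =>
    (derivWithin_of_mem_nhds (Icc_mem_nhds hu.1 hu.2)).symm
  have hderiv1 : ∀ u ∈ Ioo (0:ℝ) A, deriv w1 u = w2 u := fun u hu =>
    (derivWithin_of_mem_nhds (Icc_mem_nhds hu.1 hu.2)).symm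
  have key : Icc (0:ℝ) A ⊆ {t | 0 ≤ w t ∧ 0 ≤ w1 t} := by
    apply IsClosed.Icc_subset_of_forall_exists_gt
    · have h1 : IsClosed (I ∩ w ⁻¹' Ici 0) :=
        hcw.preimage_isClosed_of_isClosed isClosed_Icc isClosed_Ici
      have h2 : IsClosed (I ∩ w1 ⁻¹' Ici 0) :=
        hcw1.preimage_isClosed_of_isClosed isClosed_Icc isClosed_Ici
      have heq : {t : ℝ | 0 ≤ w t ∧ 0 ≤ w1 t} ∩ Icc 0 A
          = (I ∩ w ⁻¹' Ici 0) ∩ (I ∩ w1 ⁻¹' Ici 0) := by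
        ext u; simp only [mem_inter_iff, mem_setOf_eq, mem_preimage, mem_Ici, hI]; tauto
      rw [heq]; exact h1.inter h2
    · exact ⟨hw0, hw0'⟩
    · rintro x ⟨⟨hwx, hw1x⟩, hx0, hxA⟩ y' hy'
      have hxI : x ∈ I := ⟨hx0, le_of_lt hxA⟩
      have h2x : 0 < w2 x := lt_of_le_of_lt (mul_nonneg hk hwx) (hw'' x hxI)
      have hev : ∀ᶠ u in nhdsWithin x I, 0 < w2 u :=
        (hcw2 x hxI).eventually (eventually_gt_nhds h2x)
      obtain ⟨ε, hε, hball⟩ := Metric.mem_nhdsWithin_iff.mp hev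
      set y : ℝ := min (min A (x + ε/2)) y' with hydef
      have hxy : x < y := lt_min (lt_min hxA (by linarith)) hy'
      have hyA : y ≤ A := le_trans (min_le_left _ _) (min_le_left _ _)
      have hsub : Icc x y ⊆ I := fun u hu => ⟨le_trans hx0 hu.1, le_trans hu.2 hyA⟩
      have hpos : ∀ u ∈ Icc x y, 0 < w2 u := by
        intro u hu
        apply hball
        refine ⟨?_, hsub hu⟩
        rw [Metric.mem_ball, Real.dist_eq, abs_sub_lt_iff]
        constructor
        · have : u ≤ x + ε/2 :=
            le_trans hu.2 (le_trans (min_le_left _ _) (min_le_right _ _))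
          linarith
        · linarith [hu.1]
      have hmono1 : StrictMonoOn w1 (Icc x y) := by
        apply strictMonoOn_of_deriv_pos (convex_Icc x y) (hcw1.mono hsub)
        intro u hu
        rw [interior_Icc] at hu
        have huI : u ∈ Ioo (0:ℝ) A := ⟨lt_of_le_of_lt hx0 hu.1, lt_of_lt_of_le hu.2 hyA⟩
        rw [hderiv1 u huI]
        exact hpos u ⟨le_of_lt hu.1, le_of_lt hu.2⟩
      have hw1nn : ∀ u ∈ Icc x y, 0 ≤ w1 u := by
        intro u hu
        rcases eq_or_lt_of_le hu.1 with h | h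
        · rw [← h]; exact hw1x
        · exact le_of_lt (lt_of_le_of_lt hw1x
            (hmono1 (left_mem_Icc.mpr (le_of_lt hxy)) hu h))
      have hdiffint : DifferentiableOn ℝ w (interior (Icc x y)) := by
        intro u hu
        rw [interior_Icc] at hu
        have huI : u ∈ Ioo (0:ℝ) A := ⟨lt_of_le_of_lt hx0 hu.1, lt_of_lt_of_le hu.2 hyA⟩
        exact ((hw.differentiableOn (by norm_num) u (Ioo_subset_Icc_self huI)).differentiableAt
          (Icc_mem_nhds huI.1 huI.2)).differentiableWithinAt
      have hmonow : MonotoneOn w (Icc x y) := by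
        apply monotoneOn_of_deriv_nonneg (convex_Icc x y) (hcw.mono hsub) hdiffint
        intro u hu
        rw [interior_Icc] at hu
        have huI : u ∈ Ioo (0:ℝ) A := ⟨lt_of_le_of_lt hx0 hu.1, lt_of_lt_of_le hu.2 hyA⟩
        rw [hderiv u huI]
        exact hw1nn u ⟨le_of_lt hu.1, le_of_lt hu.2⟩
      refine ⟨y, ⟨?_, ?_⟩, hxy, min_le_right _ _⟩
      · exact le_trans hwx (hmonow (left_mem_Icc.mpr (le_of_lt hxy))
          (right_mem_Icc.mpr (le_of_lt hxy)) (le_of_lt hxy))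
      · exact hw1nn y (right_mem_Icc.mpr (le_of_lt hxy))
  -- strict positivity
  intro t ht
  have hwnn : ∀ u ∈ I, 0 ≤ w u := fun u hu => (key hu).1
  have hmono1 : StrictMonoOn w1 I := by
    apply strictMonoOn_of_deriv_pos (convex_Icc 0 A) hcw1
    intro u hu
    rw [interior_Icc] at hu
    rw [hderiv1 u hu]
    exact lt_of_le_of_lt (mul_nonneg hk (hwnn u (Ioo_subset_Icc_self hu)))
      (hw'' u (Ioo_subset_Icc_self hu))
  have hmonow : StrictMonoOn w (Icc 0 t) := by
    apply strictMonoOn_of_deriv_pos (convex_Icc 0 t) (hcw.mono (Icc_subset_Icc le_rfl ht.2))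
    intro u hu
    rw [interior_Icc] at hu
    have huI : u ∈ Ioo (0:ℝ) A := ⟨hu.1, lt_of_lt_of_le hu.2 ht.2⟩
    rw [hderiv u huI]
    exact lt_of_le_of_lt hw0'
      (hmono1 (left_mem_Icc.mpr hA.le) (Ioo_subset_Icc_self huI) hu.1)
  exact lt_of_le_of_lt hw0
    (hmonow (left_mem_Icc.mpr ht.1.le) (right_mem_Icc.mpr ht.1.le) ht.1)
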